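/- For every real s > 1 there exists a constant C₂ > 0 such that for all integers j ≥ 1 and k ≥ 0: Σ_{k₁+⋯+k_j = k} 1/((k₁+1)^s ⋯ (k_j+1)^s) ≤ C₂^{j−1}/(k+1)^s, where the sum is over all ordered j-tuples (k₁,…,k_j) of nonnegative integers summing to k. -/

import Mathlib

open Finset
noncomputable section
namespace Paper

private lemma sum_antidiagonalTuple_succ {j k : ℕ} (F : (Fin (j+1) → ℕ) → ℝ) :
    ∑ t ∈ Finset.Nat.antidiagonalTuple (j+1) k, F t =
      ∑ ab ∈ Finset.HasAntidiagonal.antidiagonal k,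
        ∑ t ∈ Finset.Nat.antidiagonalTuple j ab.2, F (Fin.cons ab.1 t) := by
  rw [Finset.sum_sigma']
  refine Finset.sum_nbij' (fun t => ⟨(t 0, ∑ i, Fin.tail t i), Fin.tail t⟩)
    (fun p => Fin.cons p.1.1 p.2) ?_ ?_ ?_ ?_ ?_
  · intro t ht
    simp only [Finset.Nat.mem_antidiagonalTuple] at ht
    simp only [Finset.mem_sigma, Finset.HasAntidiagonal.mem_antidiagonal,
      Finset.Nat.mem_antidiagonalTuple, and_true]
    rw [← ht, Fin.sum_univ_succ]
    rfl
  · rintro ⟨⟨a, b⟩, t⟩ hp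
    simp only [Finset.mem_sigma, Finset.HasAntidiagonal.mem_antidiagonal,
      Finset.Nat.mem_antidiagonalTuple] at hp ⊢
    rw [Fin.sum_cons, hp.2, hp.1]
  · intro t ht
    simp [Fin.cons_self_tail]
  · rintro ⟨⟨a, b⟩, t⟩ hp
    simp only [Finset.mem_sigma, Finset.HasAntidiagonal.mem_antidiagonal,
      Finset.Nat.mem_antidiagonalTuple] at hp
    simp [Fin.cons_zero, Fin.tail_cons, hp.2]
  · intro t ht
    simp [Fin.cons_self_tail]

theorem convolution_power_estimate (s : ℝ) (hs : 1 < s) :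
    ∃ C₂ : ℝ, 0 < C₂ ∧ ∀ j k : ℕ, 1 ≤ j →
      ∑ t ∈ Finset.Nat.antidiagonalTuple j k,
          ∏ i, (1 : ℝ) / ((t i : ℝ) + 1) ^ s ≤
        C₂ ^ (j - 1) / ((k : ℝ) + 1) ^ s := by
  set f : ℕ → ℝ := fun n => 1 / ((n : ℝ) + 1) ^ s with hf
  have hfpos : ∀ n, 0 < f n := fun n => by
    have : (0:ℝ) < ((n:ℝ)+1) ^ s := Real.rpow_pos_of_pos (by positivity) s
    positivity
  have hsum : Summable f := by
    have h := (Real.summable_one_div_nat_rpow (p := s)).2 hs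
    have := (summable_nat_add_iff (f := fun n => 1 / (n : ℝ) ^ s) 1).2 h
    convert this using 2 with n
    · rfl
    · push_cast [hf]; ring_nf
  set Z : ℝ := ∑' n, f n with hZ
  have hZpos : 0 < Z := hsum.tsum_pos (fun n => (hfpos n).le) 0 (hfpos 0)
  set C : ℝ := 2 ^ s * (2 * Z) with hC
  have h2s : (0:ℝ) < 2 ^ s := Real.rpow_pos_of_pos two_pos s
  have hCpos : 0 < C := by positivity
  -- pointwise bound
  have hpt : ∀ a b k : ℕ, a + b = k → f a * f b ≤ 2 ^ s * f k * (f a + f b) := by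
    intro a b k hab
    have key : ∀ a b : ℕ, a + b = k → f b ≤ 2 ^ s * f k → f a * f b ≤ 2 ^ s * f k * (f a + f b) := by
      intro a b _ hb
      calc f a * f b = f b * f a := mul_comm _ _
        _ ≤ (2 ^ s * f k) * (f a + f b) := by
            apply mul_le_mul hb (le_add_of_nonneg_right (hfpos b).le) (hfpos a).le
            positivity
    have hbnd : ∀ a b : ℕ, a + b = k → k + 1 ≤ 2 * (b + 1) → f b ≤ 2 ^ s * f k := by
      intro a b hab hle
      have hk1 : (0:ℝ) < (k:ℝ) + 1 := by positivity
      have hb1 : (0:ℝ) < (b:ℝ) + 1 := by positivity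
      have hle' : (k:ℝ) + 1 ≤ 2 * ((b:ℝ) + 1) := by exact_mod_cast hle
      have : ((k:ℝ)+1) ^ s ≤ (2 * ((b:ℝ)+1)) ^ s :=
        Real.rpow_le_rpow hk1.le hle' (by linarith)
      rw [Real.mul_rpow (by norm_num) hb1.le] at this
      simp only [hf, mul_one_div]
      rw [div_le_div_iff₀ (Real.rpow_pos_of_pos hb1 s) (Real.rpow_pos_of_pos hk1 s)]
      nlinarith [Real.rpow_pos_of_pos hb1 s]
    rcases le_total a b with h | h
    · exact key a b hab (hbnd a b hab (by omega))
    · have := key b a (by omega) (hbnd b a (by omega) (by omega))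
      calc f a * f b = f b * f a := mul_comm _ _
        _ ≤ 2 ^ s * f k * (f b + f a) := this
        _ = 2 ^ s * f k * (f a + f b) := by ring
  -- 2-fold convolution bound
  have hconv : ∀ k : ℕ, ∑ ab ∈ Finset.HasAntidiagonal.antidiagonal k, f ab.1 * f ab.2 ≤ C * f k := by
    intro k
    have hrange : ∀ m : ℕ, ∑ i ∈ Finset.range m, f i ≤ Z :=
      fun m => hsum.sum_le_tsum (Finset.range m) (fun n _ => (hfpos n).le)
    calc ∑ ab ∈ Finset.HasAntidiagonal.antidiagonal k, f ab.1 * f ab.2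
        ≤ ∑ ab ∈ Finset.HasAntidiagonal.antidiagonal k, 2 ^ s * f k * (f ab.1 + f ab.2) := by
          refine Finset.sum_le_sum fun ab hab => ?_
          exact hpt ab.1 ab.2 k (Finset.HasAntidiagonal.mem_antidiagonal.mp hab)
      _ = 2 ^ s * f k * ∑ ab ∈ Finset.HasAntidiagonal.antidiagonal k, (f ab.1 + f ab.2) := by
          rw [Finset.mul_sum]
      _ ≤ 2 ^ s * f k * (2 * Z) := by
          refine mul_le_mul_of_nonneg_left ?_ (by positivity)
          rw [Finset.Nat.sum_antidiagonal_eq_sum_range_succ (fun a b => f a + f b) k,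
            Finset.sum_add_distrib]
          have h1 : ∑ i ∈ Finset.range (k+1), f (k - i) = ∑ i ∈ Finset.range (k+1), f i := by
            simpa using Finset.sum_range_reflect (fun i => f i) (k+1)
          rw [h1, two_mul]
          exact add_le_add (hrange _) (hrange _)
      _ = C * f k := by rw [hC]; ring
  -- main induction
  refine ⟨C, hCpos, ?_⟩
  have main : ∀ m k : ℕ, ∑ t ∈ Finset.Nat.antidiagonalTuple (m+1) k,
      ∏ i, f (t i) ≤ C ^ m * f k := by
    intro m
    induction m with
    | zero =>
      intro k
      rw [Finset.Nat.antidiagonalTuple_one k]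
      simp [hf, one_div]
    | succ m ih =>
      intro k
      rw [sum_antidiagonalTuple_succ (fun t => ∏ i, f (t i))]
      have step : ∀ ab ∈ Finset.HasAntidiagonal.antidiagonal k,
          ∑ t ∈ Finset.Nat.antidiagonalTuple (m+1) ab.2,
            ∏ i, f ((Fin.cons ab.1 t : Fin (m+2) → ℕ) i) ≤ f ab.1 * (C ^ m * f ab.2) := by
        intro ab hab
        have : ∑ t ∈ Finset.Nat.antidiagonalTuple (m+1) ab.2,
            ∏ i, f ((Fin.cons ab.1 t : Fin (m+2) → ℕ) i)
            = f ab.1 * ∑ t ∈ Finset.Nat.antidiagonalTuple (m+1) ab.2, ∏ i, f (t i) := by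
          rw [Finset.mul_sum]
          refine Finset.sum_congr rfl fun t ht => ?_
          rw [Fin.prod_univ_succ]
          simp [Fin.cons_zero, Fin.cons_succ]
        rw [this]
        exact mul_le_mul_of_nonneg_left (ih ab.2) (hfpos ab.1).le
      calc ∑ ab ∈ Finset.HasAntidiagonal.antidiagonal k, ∑ t ∈ Finset.Nat.antidiagonalTuple (m+1) ab.2,
              ∏ i, f ((Fin.cons ab.1 t : Fin (m+2) → ℕ) i)
          ≤ ∑ ab ∈ Finset.HasAntidiagonal.antidiagonal k, f ab.1 * (C ^ m * f ab.2) :=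
            Finset.sum_le_sum step
        _ = C ^ m * ∑ ab ∈ Finset.HasAntidiagonal.antidiagonal k, f ab.1 * f ab.2 := by
            rw [Finset.mul_sum]; refine Finset.sum_congr rfl fun ab _ => by ring
        _ ≤ C ^ m * (C * f k) :=
            mul_le_mul_of_nonneg_left (hconv k) (by positivity)
        _ = C ^ (m+1) * f k := by ring
  intro j k hj
  obtain ⟨m, rfl⟩ : ∃ m, j = m + 1 := ⟨j - 1, by omega⟩
  have := main m k
  simpa [hf, Nat.add_sub_cancel, mul_one_div, div_eq_mul_inv] using this
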